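/- There is a universal constant C > 0 such that for every number of agents n, every profile u of unit-sum valuations, and every pure Nash equilibrium s of the Random Priority mechanism at u, the optimal social welfare satisfies SW_OPT(u) ≤ C·√n·SW_RP(u,s); i.e., the pure Price of Anarchy of Random Priority is O(√n). -/

import Mathlib

/-- A unit-sum valuation over `n` items. -/
def UnitSum {n : ℕ} (v : Fin n → ℝ) : Prop :=
  (∀ j, 0 ≤ v j) ∧ ∑ j, v j = 1

/-- A unit-range valuation over `n` items. -/
def UnitRange {n : ℕ} (v : Fin n → ℝ) : Prop :=
  (∀ j, 0 ≤ v j ∧ v j ≤ 1) ∧ (∃ j, v j = 1) ∧ (∃ j, v j = 0)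

/-- The optimal social welfare: the maximum over matchings (permutations of the
items) of the total utility. -/
noncomputable def SWopt {n : ℕ} (u : Fin n → Fin n → ℝ) : ℝ :=
  Finset.univ.sup' ⟨Equiv.refl (Fin n), Finset.mem_univ _⟩
    (fun μ : Equiv.Perm (Fin n) => ∑ i, u i (μ i))
open Classical in
/-- The list of items assigned by serial dictatorship in the first `r` positions:
given reported orderings `s` (bijections from ranks to items, rank `0` most
preferred) and an ordering `π` of the agents (position `r` is served by agent
`π r`), the agent at each position receives her most preferred item among those
not yet assigned. -/
noncomputable def sdList {n : ℕ} (s : Fin n → (Fin n ≃ Fin n)) (π : Equiv.Perm (Fin n)) :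
    ℕ → List (Fin n)
  | 0 => []
  | (r + 1) =>
      let prev := sdList s π r
      if h : r < n then
        let i := π ⟨r, h⟩
        let R : Finset (Fin n) := Finset.univ.filter (fun t => s i t ∉ prev)
        let itm : Fin n :=
          if hR : R.Nonempty then s i (R.min' hR)
          else ⟨0, Nat.lt_of_le_of_lt (Nat.zero_le r) h⟩
        prev ++ [itm]
      else prev

/-- The item assigned to agent `i` by serial dictatorship with agent ordering `π`
and reported orderings `s`. -/
noncomputable def sdAssign {n : ℕ} (s : Fin n → (Fin n ≃ Fin n)) (π : Equiv.Perm (Fin n))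
    (i : Fin n) : Fin n :=
  (sdList s π n).getD (π.symm i : ℕ) ⟨0, i.pos⟩

open Classical in
/-- `rpProb s i j` is the probability that agent `i` receives item `j` under the
Random Priority mechanism at report profile `s`: an ordering of the agents is
drawn uniformly at random and serial dictatorship is run with respect to it. -/
noncomputable def rpProb {n : ℕ} (s : Fin n → (Fin n ≃ Fin n)) (i j : Fin n) : ℝ :=
  (∑ π : Equiv.Perm (Fin n), if sdAssign s π i = j then (1 : ℝ) else 0) / (n.factorial : ℝ)

/-- The expected social welfare of Random Priority at report profile `s` under
true valuation profile `u`. -/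
noncomputable def rpSW {n : ℕ} (u : Fin n → Fin n → ℝ) (s : Fin n → (Fin n ≃ Fin n)) : ℝ :=
  ∑ i, ∑ j, rpProb s i j * u i j

/-- `s` is a pure Nash equilibrium of Random Priority at true valuation profile
`u`: no agent can strictly increase her expected utility by unilaterally
reporting a different ordering. -/
def RPNash {n : ℕ} (u : Fin n → Fin n → ℝ) (s : Fin n → (Fin n ≃ Fin n)) : Prop :=
  ∀ (i : Fin n) (s' : Fin n ≃ Fin n),
    ∑ j, rpProb (Function.update s i s') i j * u i j ≤ ∑ j, rpProb s i j * u i j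


section RP
open Classical

noncomputable def pick {n : ℕ} (s : Fin n → (Fin n ≃ Fin n)) (i : Fin n) (prev : List (Fin n))
    (h0 : 0 < n) : Fin n :=
  let R : Finset (Fin n) := Finset.univ.filter (fun t => s i t ∉ prev)
  if hR : R.Nonempty then s i (R.min' hR) else ⟨0, h0⟩

variable {n : ℕ} {s : Fin n → (Fin n ≃ Fin n)} {i : Fin n} {prev prev' : List (Fin n)} {h0 : 0 < n}

lemma exists_not_mem_of_length (h : prev.length < n) : ∃ x : Fin n, x ∉ prev := by
  by_contra hc
  push_neg at hc
  have h1 : (Finset.univ : Finset (Fin n)) ⊆ prev.toFinset := fun x _ => List.mem_toFinset.2 (hc x)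
  have := Finset.card_le_card h1
  simp at this
  have := prev.toFinset_card_le
  omega

lemma pick_spec (hne : ∃ x : Fin n, x ∉ prev) :
    pick s i prev h0 ∉ prev ∧ ∀ x : Fin n, x ∉ prev → (s i).symm (pick s i prev h0) ≤ (s i).symm x := by
  obtain ⟨x, hx⟩ := hne
  have hR : (Finset.univ.filter (fun t => s i t ∉ prev)).Nonempty :=
    ⟨(s i).symm x, by simp [hx]⟩
  constructor
  · rw [pick]
    simp only [dif_pos hR]
    have := (Finset.univ.filter (fun t => s i t ∉ prev)).min'_mem hR
    simpa using (Finset.mem_filter.1 this).2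
  · intro y hy
    rw [pick]
    simp only [dif_pos hR]
    have hmem : (s i).symm y ∈ Finset.univ.filter (fun t => s i t ∉ prev) := by simp [hy]
    have := Finset.min'_le _ _ hmem
    simpa using this

lemma pick_not_mem (hne : ∃ x : Fin n, x ∉ prev) : pick s i prev h0 ∉ prev :=
  (pick_spec hne).1

lemma pick_rank_le (hx : ∀ x, x ∈ prev → x ∈ prev') {x : Fin n} (hxx : x ∉ prev) :
    (s i).symm (pick s i prev h0) ≤ (s i).symm x := (pick_spec ⟨x, hxx⟩).2 x hxx

lemma pick_top_free (h : s i ⟨0, h0⟩ ∉ prev) : pick s i prev h0 = s i ⟨0, h0⟩ := by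
  have h1 := (pick_spec (s := s) (i := i) (h0 := h0) ⟨s i ⟨0, h0⟩, h⟩).2 (s i ⟨0, h0⟩) h
  simp only [Equiv.symm_apply_apply] at h1
  have h2 : (s i).symm (pick s i prev h0) = ⟨0, h0⟩ := le_antisymm h1 (by exact Fin.mk_le_of_le_val (Nat.zero_le _))
  have := congrArg (s i) h2
  simpa using this

lemma pick_compare (hsub : ∀ x, x ∈ prev → x ∈ prev') (hne : ∃ x : Fin n, x ∉ prev) :
    pick s i prev h0 ∈ prev' ∨ pick s i prev h0 = pick s i prev' h0 := by
  by_cases hp : pick s i prev h0 ∈ prev'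
  · exact Or.inl hp
  · right
    have hne' : ∃ x : Fin n, x ∉ prev' := ⟨_, hp⟩
    have h1 : (s i).symm (pick s i prev h0) ≤ (s i).symm (pick s i prev' h0) := by
      apply (pick_spec hne).2
      exact fun hc => (pick_spec hne').1 (hsub _ hc)
    have h2 : (s i).symm (pick s i prev' h0) ≤ (s i).symm (pick s i prev h0) :=
      (pick_spec hne').2 _ hp
    have := le_antisymm h1 h2
    have := congrArg (s i) this
    simpa using this




lemma sdList_succ (s : Fin n → (Fin n ≃ Fin n)) (π : Equiv.Perm (Fin n)) (r : ℕ) (h : r < n) :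
    sdList s π (r+1) = sdList s π r ++
      [pick s (π ⟨r, h⟩) (sdList s π r) (Nat.lt_of_le_of_lt (Nat.zero_le r) h)] := by
  rw [sdList]
  simp only [pick, dif_pos h]

lemma sdList_stop (s : Fin n → (Fin n ≃ Fin n)) (π : Equiv.Perm (Fin n)) (r : ℕ)
    (h : ¬ r < n) : sdList s π (r+1) = sdList s π r := by
  rw [sdList]
  simp only [dif_neg h]

lemma length_sdList (s : Fin n → (Fin n ≃ Fin n)) (π : Equiv.Perm (Fin n)) (r : ℕ) :
    (sdList s π r).length = min r n := by
  induction r with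
  | zero => simp [sdList]
  | succ r ih =>
    by_cases h : r < n
    · rw [sdList_succ s π r h, List.length_append, ih, List.length_singleton]
      simp only [Nat.min_def]
      split_ifs <;> omega
    · rw [sdList_stop s π r h, ih]
      simp only [Nat.min_def]
      split_ifs <;> omega

lemma mem_sdList_mono (s : Fin n → (Fin n ≃ Fin n)) (π : Equiv.Perm (Fin n)) {r r' : ℕ}
    (h : r ≤ r') {x : Fin n} (hx : x ∈ sdList s π r) : x ∈ sdList s π r' := by
  induction r' with
  | zero => exact (Nat.le_zero.mp h) ▸ hx
  | succ r' ih =>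
    rcases Nat.lt_or_ge r (r'+1) with h1 | h1
    · have hx' : x ∈ sdList s π r' := ih (by omega)
      by_cases h2 : r' < n
      · rw [sdList_succ s π r' h2]; exact List.mem_append_left _ hx'
      · rwa [sdList_stop s π r' h2]
    · have : r = r' + 1 := by omega
      subst this; exact hx

lemma sdList_congr {s s' : Fin n → (Fin n ≃ Fin n)} {π π' : Equiv.Perm (Fin n)} (r : ℕ)
    (h : ∀ (k : ℕ) (hk : k < n), k < r → π ⟨k, hk⟩ = π' ⟨k, hk⟩ ∧ s (π ⟨k, hk⟩) = s' (π' ⟨k, hk⟩)) :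
    sdList s π r = sdList s' π' r := by
  induction r with
  | zero => simp [sdList]
  | succ r ih =>
    have ihr : sdList s π r = sdList s' π' r := ih (fun k hk hkr => h k hk (by omega))
    by_cases hr : r < n
    · rw [sdList_succ s π r hr, sdList_succ s' π' r hr, ihr]
      obtain ⟨h1, h2⟩ := h r hr (by omega)
      have h2' : s (π' ⟨r, hr⟩) = s' (π' ⟨r, hr⟩) := h1 ▸ h2
      rw [h1]
      simp only [pick, h2']
    · rw [sdList_stop s π r hr, sdList_stop s' π' r hr, ihr]

lemma sdList_prefix (s : Fin n → (Fin n ≃ Fin n)) (π : Equiv.Perm (Fin n)) {r r' : ℕ}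
    (h : r ≤ r') : (sdList s π r).IsPrefix (sdList s π r') := by
  induction r' with
  | zero => have : r = 0 := by omega
            subst this; exact List.prefix_refl _
  | succ r' ih =>
    rcases Nat.lt_or_ge r (r'+1) with h1 | h1
    · have hpre := ih (by omega)
      by_cases h2 : r' < n
      · rw [sdList_succ s π r' h2]
        exact hpre.trans (List.prefix_append _ _)
      · rwa [sdList_stop s π r' h2]
    · have : r = r' + 1 := by omega
      subst this; exact List.prefix_refl _

lemma sdAssign_eq (s : Fin n → (Fin n ≃ Fin n)) (π : Equiv.Perm (Fin n)) (i : Fin n) :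
    sdAssign s π i = pick s i (sdList s π (π.symm i)) i.pos := by
  set p : ℕ := (π.symm i : ℕ) with hp
  have hpn : p < n := (π.symm i).isLt
  have hagent : π ⟨p, hpn⟩ = i := by
    have : (⟨p, hpn⟩ : Fin n) = π.symm i := by ext; simp [hp]
    rw [this]; simp
  have hsucc := sdList_succ s π p hpn
  obtain ⟨tl, htl⟩ := sdList_prefix s π (r := p+1) (r' := n) (by omega)
  unfold sdAssign
  rw [← htl, ← hp]
  rw [List.getD_append _ _ _ _ (by rw [hsucc, List.length_append, length_sdList, List.length_singleton]; omega)]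
  rw [hsucc, List.getD_append_right _ _ _ _ (by rw [length_sdList]; omega)]
  rw [length_sdList]
  have : p - min p n = 0 := by rw [Nat.min_eq_left hpn.le]; omega
  rw [this]
  simp [List.getD]
  rw [hagent]

lemma eu_eq (u_i : Fin n → ℝ) (s : Fin n → (Fin n ≃ Fin n)) (i : Fin n) :
    ∑ j, rpProb s i j * u_i j
      = (∑ π : Equiv.Perm (Fin n), u_i (sdAssign s π i)) / (n.factorial : ℝ) := by
  unfold rpProb
  rw [Finset.sum_congr rfl (fun j _ => div_mul_eq_mul_div _ _ _), ← Finset.sum_div]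
  congr 1
  rw [Finset.sum_congr rfl (fun j _ => Finset.sum_mul _ _ _), Finset.sum_comm]
  apply Finset.sum_congr rfl
  intro π _
  have hpt : ∀ j, (if sdAssign s π i = j then (1:ℝ) else 0) * u_i j
      = if sdAssign s π i = j then u_i j else 0 := fun j => by split <;> simp
  rw [Finset.sum_congr rfl (fun j _ => hpt j)]
  simp

end RP

/-- The cycle sending position `p` to the last position `n-1`, shifting
positions above `p` down by one, and fixing positions below `p`. -/
def cyc {n : ℕ} (p : Fin n) : Equiv.Perm (Fin n) where
  toFun k := if (k : ℕ) < (p : ℕ) then k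
    else ⟨if (k : ℕ) = (p : ℕ) then n - 1 else (k : ℕ) - 1,
      by have := k.isLt; have := p.isLt; split_ifs <;> omega⟩
  invFun k := if (k : ℕ) < (p : ℕ) then k
    else ⟨if (k : ℕ) = n - 1 then (p : ℕ) else (k : ℕ) + 1,
      by have := k.isLt; have := p.isLt; split_ifs <;> omega⟩
  left_inv k := by
    have hk := k.isLt; have hp := p.isLt
    apply Fin.ext
    simp only
    split_ifs <;> simp_all <;> (try (split_ifs <;> simp_all)) <;> omega
  right_inv k := by
    have hk := k.isLt; have hp := p.isLt
    apply Fin.ext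
    simp only
    split_ifs <;> simp_all <;> (try (split_ifs <;> simp_all)) <;> omega

lemma cyc_lt {n : ℕ} {p k : Fin n} (h : (k : ℕ) < (p : ℕ)) : cyc p k = k := by
  simp only [cyc, Equiv.coe_fn_mk, if_pos h]

lemma cyc_self {n : ℕ} (p : Fin n) : ((cyc p p : Fin n) : ℕ) = n - 1 := by
  simp [cyc, Equiv.coe_fn_mk]

lemma cyc_gt {n : ℕ} {p k : Fin n} (h : (p : ℕ) < (k : ℕ)) : ((cyc p k : Fin n) : ℕ) = (k : ℕ) - 1 := by
  have h1 : ¬ (k : ℕ) < (p : ℕ) := by omega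
  have h2 : ¬ (k : ℕ) = (p : ℕ) := by omega
  simp only [cyc, Equiv.coe_fn_mk, if_neg h1, if_neg h2]

section RP2
open Classical

/-- The deletion lemma: if `Π` is `π` with the agent at position `p` moved past
position `k+1`, then everything assigned in the first `k` steps under `π` is
assigned within the first `k+1` steps under `Π`. -/
lemma sdList_deletion {n : ℕ} (s : Fin n → (Fin n ≃ Fin n)) (π Ψ : Equiv.Perm (Fin n)) (p : ℕ)
    (h1 : ∀ (k : ℕ) (hk : k < n), k < p → Ψ ⟨k, hk⟩ = π ⟨k, hk⟩)
    (h2 : ∀ (k : ℕ) (hk : k + 1 < n), p ≤ k → Ψ ⟨k + 1, hk⟩ = π ⟨k, by omega⟩) :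
    ∀ (k : ℕ), k < n → ∀ x ∈ sdList s π k, x ∈ sdList s Ψ (k + 1) := by
  intro k
  induction k with
  | zero => intro _ x hx; simp [sdList] at hx
  | succ k ih =>
    intro hk1 x hx
    by_cases hcase : k < p
    · -- prefixes agree up to k+1 ≤ p
      have heq : sdList s π (k+1) = sdList s Ψ (k+1) :=
        sdList_congr (k+1) (fun m hm hmk => ⟨(h1 m hm (by omega)).symm, by rw [h1 m hm (by omega)]⟩)
      rw [heq] at hx
      exact mem_sdList_mono s Ψ (by omega) hx
    · -- k ≥ p : one-step comparison
      push_neg at hcase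
      have hkn : k < n := by omega
      have hskn : k + 1 < n := hk1
      have hb : Ψ ⟨k+1, hskn⟩ = π ⟨k, hkn⟩ := h2 k hskn hcase
      rw [sdList_succ s π k hkn] at hx
      rw [sdList_succ s Ψ (k+1) hskn, hb]
      have hsub : ∀ y ∈ sdList s π k, y ∈ sdList s Ψ (k+1) := ih (by omega)
      have hfree : ∃ y : Fin n, y ∉ sdList s π k := by
        apply exists_not_mem_of_length
        rw [length_sdList]; omega
      rcases List.mem_append.1 hx with hx1 | hx2
      · exact List.mem_append_left _ (hsub x hx1)
      · have hxp : x = pick s (π ⟨k, hkn⟩) (sdList s π k) (by omega) := by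
          simpa using hx2
        rcases pick_compare (prev' := sdList s Ψ (k+1)) hsub hfree with hc | hc
        · rw [hxp]
          exact List.mem_append_left _ (by convert hc using 2)
        · rw [hxp]
          apply List.mem_append_right
          simp only [List.mem_singleton]
          rw [hc]

variable {n : ℕ}


lemma mul_symm_apply {n : ℕ} (π c : Equiv.Perm (Fin n)) (i : Fin n) :
    (π * c).symm i = c.symm (π.symm i) := by
  simp [Equiv.Perm.mul_def]

lemma card_fiber_eq {n : ℕ} (i : Fin n) (p q : Fin n) :
    (Finset.univ.filter (fun π : Equiv.Perm (Fin n) => π.symm i = p)).card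
      = (Finset.univ.filter (fun π : Equiv.Perm (Fin n) => π.symm i = q)).card := by
  classical
  apply Finset.card_bij (fun π _ => π * Equiv.swap p q)
  · intro π hπ
    simp only [Finset.mem_filter, Finset.mem_univ, true_and] at hπ ⊢
    rw [mul_symm_apply, hπ]
    simp
  · intro a ha b hb hab
    exact mul_right_cancel hab
  · intro τ hτ
    simp only [Finset.mem_filter, Finset.mem_univ, true_and] at hτ
    refine ⟨τ * Equiv.swap p q, ?_, ?_⟩
    · simp only [Finset.mem_filter, Finset.mem_univ, true_and]
      rw [mul_symm_apply, hτ]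
      simp
    · rw [mul_assoc]
      simp


lemma card_fiber {n : ℕ} (i : Fin n) (p : Fin n) :
    (Finset.univ.filter (fun π : Equiv.Perm (Fin n) => π.symm i = p)).card = (n-1).factorial := by
  classical
  have hn : 0 < n := i.pos
  have h0 : (Finset.univ : Finset (Equiv.Perm (Fin n))).card = n.factorial := by
    rw [Finset.card_univ, Fintype.card_perm, Fintype.card_fin]
  have h1 : (Finset.univ : Finset (Equiv.Perm (Fin n))).card
      = ∑ q : Fin n, (Finset.univ.filter (fun π : Equiv.Perm (Fin n) => π.symm i = q)).card :=
    Finset.card_eq_sum_card_fiberwise (fun π _ => Finset.mem_univ (π.symm i))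
  have h2 : ∀ q : Fin n, (Finset.univ.filter (fun π : Equiv.Perm (Fin n) => π.symm i = q)).card
      = (Finset.univ.filter (fun π : Equiv.Perm (Fin n) => π.symm i = p)).card :=
    fun q => card_fiber_eq i q p
  rw [h0, Finset.sum_congr rfl (fun q _ => h2 q), Finset.sum_const, Finset.card_univ,
    Fintype.card_fin, smul_eq_mul] at h1
  have hfact : n.factorial = n * (n-1).factorial := by
    conv_lhs => rw [show n = (n-1)+1 by omega]
    rw [Nat.factorial_succ]
    congr 1
    omega
  rw [hfact] at h1
  exact Nat.eq_of_mul_eq_mul_left hn h1.symm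

lemma sum_over_pos {n : ℕ} (i : Fin n) (f : Fin n → ℝ) :
    ∑ π : Equiv.Perm (Fin n), f (π.symm i) = ((n-1).factorial : ℝ) * ∑ p : Fin n, f p := by
  classical
  have hfib := Finset.sum_fiberwise_of_maps_to (s := (Finset.univ : Finset (Equiv.Perm (Fin n))))
    (t := (Finset.univ : Finset (Fin n))) (g := fun π : Equiv.Perm (Fin n) => π.symm i)
    (fun π _ => Finset.mem_univ (π.symm i)) (fun π => f (π.symm i))
  rw [← hfib]
  have hin : ∀ p : Fin n, ∑ π ∈ Finset.univ.filter (fun π : Equiv.Perm (Fin n) => π.symm i = p),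
      f (π.symm i) = ((n-1).factorial : ℝ) * f p := by
    intro p
    rw [Finset.sum_congr rfl (fun π hπ => by rw [(Finset.mem_filter.1 hπ).2])]
    rw [Finset.sum_const, nsmul_eq_mul, card_fiber i p]
  rw [Finset.sum_congr rfl (fun p _ => hin p), ← Finset.mul_sum]

lemma sum_mul_right {n : ℕ} (c : Equiv.Perm (Fin n)) (G : Equiv.Perm (Fin n) → ℝ) :
    ∑ π : Equiv.Perm (Fin n), G (π * c) = ∑ π : Equiv.Perm (Fin n), G π :=
  Fintype.sum_equiv (Equiv.mulRight c) (fun π => G (π * c)) G (fun π => rfl)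


section Star
open Classical

variable {n : ℕ}

/-- Step A. -/
lemma starA (s : Fin n → (Fin n ≃ Fin n)) (i j : Fin n) (t : ℕ) (ht : t ≤ n)
    (r : ℕ) (hr : r < t) :
    (∑ π : Equiv.Perm (Fin n),
        if ((π.symm i : ℕ) = n-1 ∧ j ∉ sdList s π (t-1)) then (1:ℝ) else 0)
    ≤ ∑ π : Equiv.Perm (Fin n),
        if ((π.symm i : ℕ) = r ∧ j ∉ sdList s π r) then (1:ℝ) else 0 := by
  have hrn : r < n := by omega
  set rf : Fin n := ⟨r, hrn⟩ with hrf
  set c : Equiv.Perm (Fin n) := cyc rf with hc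
  rw [← sum_mul_right c (fun π => if ((π.symm i : ℕ) = r ∧ j ∉ sdList s π r) then (1:ℝ) else 0)]
  apply Finset.sum_le_sum
  intro π _
  by_cases h : (π.symm i : ℕ) = n-1 ∧ j ∉ sdList s π (t-1)
  · rw [if_pos h]
    obtain ⟨h1, h2⟩ := h
    have hc1 : (((π * c).symm i : Fin n) : ℕ) = r := by
      rw [mul_symm_apply]
      have : π.symm i = c rf := by
        apply Fin.ext
        rw [h1, hc, cyc_self]
      rw [this, Equiv.symm_apply_apply, hrf]
    have hlist : sdList s (π * c) r = sdList s π r := by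
      apply sdList_congr
      intro k hk hkr
      have hfix : c ⟨k, hk⟩ = ⟨k, hk⟩ := cyc_lt (by simpa using hkr)
      exact ⟨by show π (c ⟨k, hk⟩) = π ⟨k, hk⟩; rw [hfix],
             by show s (π (c ⟨k, hk⟩)) = s (π ⟨k, hk⟩); rw [hfix]⟩
    have hnot : j ∉ sdList s (π * c) r := by
      rw [hlist]
      intro hmem
      exact h2 (mem_sdList_mono s π (by omega) hmem)
    rw [if_pos ⟨hc1, hnot⟩]
  · rw [if_neg h]
    split <;> norm_num

/-- Step B. -/
lemma starB (s : Fin n → (Fin n ≃ Fin n)) (i j : Fin n) (t : ℕ) (ht1 : 1 ≤ t) (ht : t ≤ n)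
    (p : Fin n) :
    (∑ π : Equiv.Perm (Fin n),
        if (π.symm i = p ∧ j ∉ sdList s π t) then (1:ℝ) else 0)
    ≤ ∑ π : Equiv.Perm (Fin n),
        if ((π.symm i : ℕ) = n-1 ∧ j ∉ sdList s π (t-1)) then (1:ℝ) else 0 := by
  set c : Equiv.Perm (Fin n) := cyc p with hcdef
  rw [← sum_mul_right c (fun π => if (π.symm i = p ∧ j ∉ sdList s π t) then (1:ℝ) else 0)]
  apply Finset.sum_le_sum
  intro π _
  by_cases h : (π * c).symm i = p ∧ j ∉ sdList s (π * c) t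
  swap
  · rw [if_neg h]; split <;> norm_num
  rw [if_pos h]
  obtain ⟨h1, h2⟩ := h
  have hpos : (π.symm i : ℕ) = n-1 := by
    rw [mul_symm_apply, Equiv.symm_apply_eq] at h1
    rw [h1, hcdef, cyc_self]
  have hdel : ∀ x ∈ sdList s π (t-1), x ∈ sdList s (π * c) t := by
    have hd := sdList_deletion s π (π * c) (p : ℕ)
      (fun k hk hkp => by
        show π (c ⟨k, hk⟩) = π ⟨k, hk⟩
        rw [hcdef, cyc_lt (by simpa using hkp)])
      (fun k hk hpk => by
        show π (c ⟨k+1, hk⟩) = π ⟨k, by omega⟩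
        congr 1
        apply Fin.ext
        rw [hcdef, cyc_gt (by simpa using Nat.lt_succ_of_le hpk)]
        simp)
    intro x hx
    have hres := hd (t-1) (by omega) x hx
    have ht' : t - 1 + 1 = t := by omega
    rwa [ht'] at hres
  have hnot : j ∉ sdList s π (t-1) := fun hmem => h2 (hdel j hmem)
  rw [if_pos ⟨hpos, hnot⟩]

/-- The key counting inequality. -/
lemma star (s : Fin n → (Fin n ≃ Fin n)) (i j : Fin n) (t : ℕ) (ht1 : 1 ≤ t) (ht : t ≤ n) :
    (t : ℝ) / n * ∑ π : Equiv.Perm (Fin n), (if j ∉ sdList s π t then (1:ℝ) else 0)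
      ≤ ∑ π : Equiv.Perm (Fin n), (if j ∉ sdList s π ((π.symm i : ℕ)) then (1:ℝ) else 0) := by
  have hn : 0 < n := i.pos
  set M : ℝ := ∑ π : Equiv.Perm (Fin n),
      (if ((π.symm i : ℕ) = n-1 ∧ j ∉ sdList s π (t-1)) then (1:ℝ) else 0) with hM
  have hB : (∑ π : Equiv.Perm (Fin n), (if j ∉ sdList s π t then (1:ℝ) else 0)) ≤ n * M := by
    have hsplit : ∀ π : Equiv.Perm (Fin n), (if j ∉ sdList s π t then (1:ℝ) else 0)
        = ∑ p : Fin n, (if (π.symm i = p ∧ j ∉ sdList s π t) then (1:ℝ) else 0) := by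
      intro π
      by_cases hA : j ∉ sdList s π t
      · simp [hA]
      · simp [hA]
    rw [Finset.sum_congr rfl (fun π _ => hsplit π), Finset.sum_comm]
    calc ∑ p : Fin n, ∑ π : Equiv.Perm (Fin n),
          (if (π.symm i = p ∧ j ∉ sdList s π t) then (1:ℝ) else 0)
        ≤ ∑ _p : Fin n, M := Finset.sum_le_sum (fun p _ => starB s i j t ht1 ht p)
      _ = n * M := by
          rw [Finset.sum_const, Finset.card_univ, Fintype.card_fin, nsmul_eq_mul]
  have hA : (t : ℝ) * M ≤ ∑ π : Equiv.Perm (Fin n),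
      (if j ∉ sdList s π ((π.symm i : ℕ)) then (1:ℝ) else 0) := by
    have h1 : (t : ℝ) * M = ∑ _r ∈ Finset.range t, M := by
      rw [Finset.sum_const, Finset.card_range, nsmul_eq_mul]
    rw [h1]
    calc ∑ _r ∈ Finset.range t, M
        ≤ ∑ r ∈ Finset.range t, ∑ π : Equiv.Perm (Fin n),
            (if ((π.symm i : ℕ) = r ∧ j ∉ sdList s π r) then (1:ℝ) else 0) :=
          Finset.sum_le_sum (fun r hr => starA s i j t ht r (Finset.mem_range.1 hr))
      _ = ∑ π : Equiv.Perm (Fin n), ∑ r ∈ Finset.range t,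
            (if ((π.symm i : ℕ) = r ∧ j ∉ sdList s π r) then (1:ℝ) else 0) := Finset.sum_comm
      _ ≤ ∑ π : Equiv.Perm (Fin n), (if j ∉ sdList s π ((π.symm i : ℕ)) then (1:ℝ) else 0) := by
          apply Finset.sum_le_sum
          intro π _
          have hptw : ∀ r ∈ Finset.range t,
              (if ((π.symm i : ℕ) = r ∧ j ∉ sdList s π r) then (1:ℝ) else 0)
              ≤ if ((π.symm i : ℕ) = r) then (if j ∉ sdList s π ((π.symm i : ℕ)) then (1:ℝ) else 0) else 0 := by
            intro r _
            by_cases hcond : (π.symm i : ℕ) = r ∧ j ∉ sdList s π r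
            · rw [if_pos hcond, if_pos hcond.1, if_pos (hcond.1 ▸ hcond.2)]
            · rw [if_neg hcond]
              split
              · split <;> norm_num
              · norm_num
          calc ∑ r ∈ Finset.range t,
                (if ((π.symm i : ℕ) = r ∧ j ∉ sdList s π r) then (1:ℝ) else 0)
              ≤ ∑ r ∈ Finset.range t,
                (if ((π.symm i : ℕ) = r) then (if j ∉ sdList s π ((π.symm i : ℕ)) then (1:ℝ) else 0) else 0) :=
                Finset.sum_le_sum hptw
            _ ≤ if j ∉ sdList s π ((π.symm i : ℕ)) then (1:ℝ) else 0 := by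
                rw [Finset.sum_ite_eq (Finset.range t) ((π.symm i : ℕ))
                  (fun _ => if j ∉ sdList s π ((π.symm i : ℕ)) then (1:ℝ) else 0)]
                split
                · exact le_refl _
                · split <;> norm_num
  calc (t : ℝ) / n * ∑ π : Equiv.Perm (Fin n), (if j ∉ sdList s π t then (1:ℝ) else 0)
      ≤ (t : ℝ) / n * (n * M) := by
        apply mul_le_mul_of_nonneg_left hB
        positivity
    _ = (t : ℝ) * M := by
        field_simp
    _ ≤ _ := hA

end Star

section Dev
open Classical

variable {n : ℕ}

lemma sdList_update (s : Fin n → (Fin n ≃ Fin n)) (π : Equiv.Perm (Fin n)) (i : Fin n)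
    (e : Fin n ≃ Fin n) :
    sdList (Function.update s i e) π ((π.symm i : ℕ)) = sdList s π ((π.symm i : ℕ)) := by
  apply sdList_congr
  intro k hk hkr
  refine ⟨rfl, ?_⟩
  have hne : π ⟨k, hk⟩ ≠ i := by
    intro hc
    have : (⟨k, hk⟩ : Fin n) = π.symm i := by rw [← hc]; simp
    have := congrArg Fin.val this
    simp at this
    omega
  rw [Function.update_of_ne hne]

lemma dev_first (u_i : Fin n → ℝ) (hnn : ∀ j, 0 ≤ u_i j) (s : Fin n → (Fin n ≃ Fin n))
    (i j : Fin n) (π : Equiv.Perm (Fin n)) :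
    u_i j * (if j ∉ sdList s π ((π.symm i : ℕ)) then (1:ℝ) else 0)
      ≤ u_i (sdAssign (Function.update s i (Equiv.swap (⟨0, i.pos⟩ : Fin n) j)) π i) := by
  set e : Fin n ≃ Fin n := Equiv.swap (⟨0, i.pos⟩ : Fin n) j with he
  set s' := Function.update s i e with hs'
  rw [sdAssign_eq s' π i]
  have hlist : sdList s' π ((π.symm i : ℕ)) = sdList s π ((π.symm i : ℕ)) :=
    sdList_update s π i e
  by_cases hj : j ∉ sdList s π ((π.symm i : ℕ))
  · rw [if_pos hj, mul_one]
    have htop : s' i ⟨0, i.pos⟩ = j := by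
      rw [hs', Function.update_self, he, Equiv.swap_apply_left]
    have : pick s' i (sdList s' π ((π.symm i : ℕ))) i.pos = s' i ⟨0, i.pos⟩ := by
      apply pick_top_free
      rw [htop, hlist]
      exact hj
    rw [this, htop]
  · rw [if_neg hj, mul_zero]
    exact hnn _

lemma dev_truthful (u_i : Fin n → ℝ) (s : Fin n → (Fin n ≃ Fin n)) (i : Fin n)
    (e : Fin n ≃ Fin n) (hmono : ∀ k l : Fin n, k ≤ l → u_i (e l) ≤ u_i (e k))
    (π : Equiv.Perm (Fin n)) :
    u_i (e (π.symm i)) ≤ u_i (sdAssign (Function.update s i e) π i) := by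
  set s' := Function.update s i e with hs'
  rw [sdAssign_eq s' π i]
  set prev := sdList s' π ((π.symm i : ℕ)) with hprev
  have hlen : prev.length = (π.symm i : ℕ) := by
    rw [hprev, length_sdList]
    exact Nat.min_eq_left (π.symm i).isLt.le
  -- pigeonhole: some item among the top (pos+1) e-ranked items is free
  have hpig : ∃ k : Fin n, k ≤ π.symm i ∧ e k ∉ prev := by
    by_contra hc
    push_neg at hc
    have hsub : (Finset.Iic (π.symm i)).image e ⊆ prev.toFinset := by
      intro x hx
      obtain ⟨k, hk, rfl⟩ := Finset.mem_image.1 hx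
      exact List.mem_toFinset.2 (hc k (Finset.mem_Iic.1 hk))
    have hc1 := Finset.card_le_card hsub
    rw [Finset.card_image_of_injective _ e.injective, Fin.card_Iic] at hc1
    have hc2 := prev.toFinset_card_le
    have := List.toFinset_card_le prev
    have hlenle : prev.toFinset.card ≤ (π.symm i : ℕ) := by
      calc prev.toFinset.card ≤ prev.length := List.toFinset_card_le prev
        _ = (π.symm i : ℕ) := hlen
    omega
  obtain ⟨k, hk, hkfree⟩ := hpig
  have hrank : (s' i).symm (pick s' i prev i.pos) ≤ (s' i).symm (e k) :=
    (pick_spec ⟨e k, hkfree⟩).2 (e k) hkfree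
  have hsi : s' i = e := by rw [hs', Function.update_self]
  rw [hsi] at hrank
  simp only [Equiv.symm_apply_apply] at hrank
  have h1 : u_i (e (e.symm (pick s' i prev i.pos))) ≥ u_i (e k) := hmono _ _ hrank
  simp only [Equiv.apply_symm_apply] at h1
  calc u_i (e (π.symm i)) ≤ u_i (e k) := hmono k (π.symm i) hk
    _ ≤ _ := h1

end Dev

section Welfare
open Classical

variable {n : ℕ}

lemma factorial_pos_real : (0:ℝ) < (n.factorial : ℝ) := by
  exact_mod_cast Nat.factorial_pos n

lemma eu_ge_one_div (u : Fin n → Fin n → ℝ) (s : Fin n → (Fin n ≃ Fin n))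
    (hu : ∀ i, UnitSum (u i)) (hN : RPNash u s) (i : Fin n) :
    (1:ℝ)/n ≤ ∑ j, rpProb s i j * u i j := by
  have hn : 0 < n := i.pos
  set σ : Equiv.Perm (Fin n) := Tuple.sort (u i) with hσ
  set e : Fin n ≃ Fin n := (Fin.revPerm).trans σ with he
  have hmono : ∀ k l : Fin n, k ≤ l → u i (e l) ≤ u i (e k) := by
    intro k l hkl
    have : l.rev ≤ k.rev := Fin.rev_le_rev.2 hkl
    have hm := Tuple.monotone_sort (u i) this
    simpa [he] using hm
  have h1 : ∀ π : Equiv.Perm (Fin n),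
      u i (e (π.symm i)) ≤ u i (sdAssign (Function.update s i e) π i) :=
    dev_truthful (u i) s i e hmono
  have h2 : (∑ π : Equiv.Perm (Fin n), u i (e (π.symm i)))
      ≤ ∑ π : Equiv.Perm (Fin n), u i (sdAssign (Function.update s i e) π i) :=
    Finset.sum_le_sum (fun π _ => h1 π)
  have h3 : ∑ π : Equiv.Perm (Fin n), u i (e (π.symm i))
      = ((n-1).factorial : ℝ) := by
    rw [sum_over_pos i (fun p => u i (e p))]
    rw [Equiv.sum_comp e (u i), (hu i).2, mul_one]
  have h4 := hN i e
  rw [eu_eq (u i) (Function.update s i e) i] at h4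
  have h5 : ((n-1).factorial : ℝ) / (n.factorial : ℝ) = 1/n := by
    have hfact : (n.factorial : ℝ) = n * ((n-1).factorial : ℝ) := by
      have : n.factorial = n * (n-1).factorial := by
        conv_lhs => rw [show n = (n-1)+1 by omega]
        rw [Nat.factorial_succ]
        congr 1; omega
      exact_mod_cast this
    rw [hfact]
    rw [div_mul_eq_div_div_swap]
    congr 1
    apply div_self
    have : (0:ℝ) < ((n-1).factorial : ℝ) := by exact_mod_cast Nat.factorial_pos (n-1)
    linarith
  calc (1:ℝ)/n = ((n-1).factorial : ℝ) / (n.factorial : ℝ) := h5.symm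
    _ = (∑ π : Equiv.Perm (Fin n), u i (e (π.symm i))) / (n.factorial : ℝ) := by rw [h3]
    _ ≤ (∑ π : Equiv.Perm (Fin n), u i (sdAssign (Function.update s i e) π i)) / (n.factorial : ℝ) := by
        gcongr
    _ ≤ _ := h4

lemma rpSW_ge_one (hn : 0 < n) (u : Fin n → Fin n → ℝ) (s : Fin n → (Fin n ≃ Fin n))
    (hu : ∀ i, UnitSum (u i)) (hN : RPNash u s) : (1:ℝ) ≤ rpSW u s := by
  unfold rpSW
  calc (1:ℝ) = ∑ _i : Fin n, (1:ℝ)/n := by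
        rw [Finset.sum_const, Finset.card_univ, Fintype.card_fin, nsmul_eq_mul]
        field_simp
    _ ≤ ∑ i, ∑ j, rpProb s i j * u i j :=
        Finset.sum_le_sum (fun i _ => eu_ge_one_div u s hu hN i)

lemma per_perm_count (u : Fin n → Fin n → ℝ) (hu : ∀ i, UnitSum (u i))
    (μ : Equiv.Perm (Fin n)) (s : Fin n → (Fin n ≃ Fin n)) (π : Equiv.Perm (Fin n))
    (t : ℕ) (ht : t ≤ n) :
    (∑ i, u i (μ i)) - t ≤ ∑ i, u i (μ i) * (if μ i ∉ sdList s π t then (1:ℝ) else 0) := by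
  classical
  set L := sdList s π t with hL
  have hlen : L.length = t := by rw [hL, length_sdList]; omega
  have hsplit : ∀ i, u i (μ i) * (if μ i ∉ L then (1:ℝ) else 0)
      = u i (μ i) - u i (μ i) * (if μ i ∈ L then (1:ℝ) else 0) := by
    intro i
    by_cases h : μ i ∈ L <;> simp [h]
  rw [Finset.sum_congr rfl (fun i _ => hsplit i), Finset.sum_sub_distrib]
  have hub : ∑ i, u i (μ i) * (if μ i ∈ L then (1:ℝ) else 0) ≤ (t:ℝ) := by
    have hle : ∀ i, u i (μ i) * (if μ i ∈ L then (1:ℝ) else 0) ≤ (if μ i ∈ L then (1:ℝ) else 0) := by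
      intro i
      by_cases h : μ i ∈ L
      · simp only [h, if_pos, mul_one]
        have hsum := (hu i).2
        have hnn := (hu i).1
        calc u i (μ i) ≤ ∑ j, u i j := Finset.single_le_sum (fun j _ => hnn j) (Finset.mem_univ _)
          _ = 1 := hsum
      · simp [h]
    calc ∑ i, u i (μ i) * (if μ i ∈ L then (1:ℝ) else 0)
        ≤ ∑ i, (if μ i ∈ L then (1:ℝ) else 0) := Finset.sum_le_sum (fun i _ => hle i)
      _ = ((Finset.univ.filter (fun i => μ i ∈ L)).card : ℝ) := by
          rw [Finset.sum_boole]
      _ ≤ (t:ℝ) := by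
          have hcard : (Finset.univ.filter (fun i => μ i ∈ L)).card ≤ L.toFinset.card := by
            apply Finset.card_le_card_of_injOn (fun i => μ i)
            · intro a ha
              rw [Finset.mem_coe, Finset.mem_filter] at ha
              exact List.mem_toFinset.2 ha.2
            · intro a _ b _ hab
              exact μ.injective hab
          have hcard2 : L.toFinset.card ≤ L.length := List.toFinset_card_le L
          have : (Finset.univ.filter (fun i => μ i ∈ L)).card ≤ t := by omega
          exact_mod_cast this
  linarith

lemma rpSW_main (hn : 0 < n) (u : Fin n → Fin n → ℝ) (s : Fin n → (Fin n ≃ Fin n))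
    (hu : ∀ i, UnitSum (u i)) (hN : RPNash u s) (μ : Equiv.Perm (Fin n))
    (t : ℕ) (ht1 : 1 ≤ t) (ht : t ≤ n) :
    (t:ℝ)/n * ((∑ i, u i (μ i)) - t) ≤ rpSW u s := by
  have hEU : ∀ i : Fin n,
      (t:ℝ)/n * (u i (μ i) * ∑ π : Equiv.Perm (Fin n), (if μ i ∉ sdList s π t then (1:ℝ) else 0))
        / (n.factorial : ℝ)
      ≤ ∑ j, rpProb s i j * u i j := by
    intro i
    have hdev : ∀ π : Equiv.Perm (Fin n),
        u i (μ i) * (if μ i ∉ sdList s π ((π.symm i : ℕ)) then (1:ℝ) else 0)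
        ≤ u i (sdAssign (Function.update s i (Equiv.swap (⟨0, i.pos⟩ : Fin n) (μ i))) π i) :=
      dev_first (u i) (hu i).1 s i (μ i)
    have hstar := star s i (μ i) t ht1 ht
    have hnn : 0 ≤ u i (μ i) := (hu i).1 _
    have hchain :
        (t:ℝ)/n * (u i (μ i) * ∑ π : Equiv.Perm (Fin n), (if μ i ∉ sdList s π t then (1:ℝ) else 0))
        ≤ ∑ π : Equiv.Perm (Fin n),
            u i (sdAssign (Function.update s i (Equiv.swap (⟨0, i.pos⟩ : Fin n) (μ i))) π i) := by
      calc (t:ℝ)/n * (u i (μ i) * ∑ π : Equiv.Perm (Fin n), (if μ i ∉ sdList s π t then (1:ℝ) else 0))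
          = u i (μ i) * ((t:ℝ)/n * ∑ π : Equiv.Perm (Fin n), (if μ i ∉ sdList s π t then (1:ℝ) else 0)) := by ring
        _ ≤ u i (μ i) * ∑ π : Equiv.Perm (Fin n),
              (if μ i ∉ sdList s π ((π.symm i : ℕ)) then (1:ℝ) else 0) :=
            mul_le_mul_of_nonneg_left hstar hnn
        _ = ∑ π : Equiv.Perm (Fin n),
              u i (μ i) * (if μ i ∉ sdList s π ((π.symm i : ℕ)) then (1:ℝ) else 0) :=
            Finset.mul_sum _ _ _
        _ ≤ _ := Finset.sum_le_sum (fun π _ => hdev π)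
    have hN' := hN i (Equiv.swap (⟨0, i.pos⟩ : Fin n) (μ i))
    rw [eu_eq (u i) (Function.update s i (Equiv.swap (⟨0, i.pos⟩ : Fin n) (μ i))) i] at hN'
    calc (t:ℝ)/n * (u i (μ i) * ∑ π : Equiv.Perm (Fin n), (if μ i ∉ sdList s π t then (1:ℝ) else 0))
          / (n.factorial : ℝ)
        ≤ (∑ π : Equiv.Perm (Fin n),
            u i (sdAssign (Function.update s i (Equiv.swap (⟨0, i.pos⟩ : Fin n) (μ i))) π i))
          / (n.factorial : ℝ) := by gcongr
      _ ≤ _ := hN'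
  -- sum over agents
  have hsum := Finset.sum_le_sum (fun i (_ : i ∈ Finset.univ) => hEU i)
  unfold rpSW
  refine le_trans ?_ hsum
  -- compute lower bound for the sum of lower bounds
  have hswap : ∑ i : Fin n, (t:ℝ)/n * (u i (μ i) * ∑ π : Equiv.Perm (Fin n),
        (if μ i ∉ sdList s π t then (1:ℝ) else 0)) / (n.factorial : ℝ)
      = (t:ℝ)/n / (n.factorial : ℝ) * ∑ π : Equiv.Perm (Fin n), ∑ i : Fin n,
          u i (μ i) * (if μ i ∉ sdList s π t then (1:ℝ) else 0) := by
    have hterm : ∀ i : Fin n, (t:ℝ)/n * (u i (μ i) * ∑ π : Equiv.Perm (Fin n),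
        (if μ i ∉ sdList s π t then (1:ℝ) else 0)) / (n.factorial : ℝ)
        = ∑ π : Equiv.Perm (Fin n), (t:ℝ)/n / (n.factorial : ℝ)
            * (u i (μ i) * (if μ i ∉ sdList s π t then (1:ℝ) else 0)) := by
      intro i
      rw [← Finset.mul_sum, ← Finset.mul_sum]
      ring
    rw [Finset.sum_congr rfl (fun i _ => hterm i), Finset.sum_comm, Finset.mul_sum]
    apply Finset.sum_congr rfl
    intro π _
    rw [Finset.mul_sum]
  rw [hswap]
  have hper : ∀ π : Equiv.Perm (Fin n), ((∑ i, u i (μ i)) - t)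
      ≤ ∑ i : Fin n, u i (μ i) * (if μ i ∉ sdList s π t then (1:ℝ) else 0) :=
    fun π => per_perm_count u hu μ s π t ht
  calc (t:ℝ)/n * ((∑ i, u i (μ i)) - t)
      = (t:ℝ)/n / (n.factorial : ℝ) * ((n.factorial : ℝ) * ((∑ i, u i (μ i)) - t)) := by
        field_simp
    _ ≤ (t:ℝ)/n / (n.factorial : ℝ) * ∑ π : Equiv.Perm (Fin n), ∑ i : Fin n,
          u i (μ i) * (if μ i ∉ sdList s π t then (1:ℝ) else 0) := by
        apply mul_le_mul_of_nonneg_left _ (by positivity)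
        calc (n.factorial : ℝ) * ((∑ i, u i (μ i)) - t)
            = ∑ _π : Equiv.Perm (Fin n), ((∑ i, u i (μ i)) - t) := by
              rw [Finset.sum_const, Finset.card_univ, nsmul_eq_mul]
              congr 1
              simp [Fintype.card_perm]
          _ ≤ _ := Finset.sum_le_sum (fun π _ => hper π)

/-- The pure Price of Anarchy of Random Priority is `O(√n)`: there is a universal
constant `C > 0` such that for every `n`, every profile `u` of unit-sum
valuations and every pure Nash equilibrium `s` of Random Priority at `u`,
`SW_OPT(u) ≤ C · √n · SW_RP(u, s)`. -/
theorem rp_pure_poa_sqrt_n :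
    ∃ C : ℝ, 0 < C ∧
      ∀ (n : ℕ) (u : Fin n → Fin n → ℝ) (s : Fin n → (Fin n ≃ Fin n)),
        (∀ i, UnitSum (u i)) → RPNash u s →
        SWopt u ≤ C * Real.sqrt n * rpSW u s := by
  refine ⟨4, by norm_num, ?_⟩
  intro n u s hu hN
  rcases Nat.eq_zero_or_pos n with hn | hn0
  · subst hn
    have h1 : SWopt u = 0 := by
      unfold SWopt
      have hconst : (fun μ : Equiv.Perm (Fin 0) => ∑ i, u i (μ i)) = fun _ => (0:ℝ) :=
        funext (fun μ => by simp)
      rw [hconst]; exact Finset.sup'_const _ _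
    rw [h1]
    norm_num
  · set OPT := SWopt u with hOPTdef
    set SW := rpSW u s with hSWdef
    obtain ⟨μ, -, hμ⟩ := Finset.exists_mem_eq_sup'
      (⟨Equiv.refl (Fin n), Finset.mem_univ _⟩ : (Finset.univ : Finset (Equiv.Perm (Fin n))).Nonempty)
      (fun μ : Equiv.Perm (Fin n) => ∑ i, u i (μ i))
    have hOPT : OPT = ∑ i, u i (μ i) := hμ
    have hOPTnn : 0 ≤ OPT := by
      rw [hOPT]
      exact Finset.sum_nonneg (fun i _ => (hu i).1 _)
    have hOPTub : OPT ≤ (n:ℝ) := by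
      rw [hOPT]
      calc ∑ i, u i (μ i) ≤ ∑ _i : Fin n, (1:ℝ) := by
            apply Finset.sum_le_sum
            intro i _
            calc u i (μ i) ≤ ∑ j, u i j :=
                  Finset.single_le_sum (fun j _ => (hu i).1 j) (Finset.mem_univ _)
              _ = 1 := (hu i).2
        _ = (n:ℝ) := by rw [Finset.sum_const, Finset.card_univ, Fintype.card_fin, nsmul_eq_mul, mul_one]
    have hSW1 : (1:ℝ) ≤ SW := rpSW_ge_one hn0 u s hu hN
    set R : ℝ := Real.sqrt n with hRdef
    have hRsq : R * R = (n:ℝ) := Real.mul_self_sqrt (by positivity)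
    have hR1 : 1 ≤ R := by
      rw [hRdef, show (1:ℝ) = Real.sqrt 1 by rw [Real.sqrt_one]]
      apply Real.sqrt_le_sqrt
      exact_mod_cast hn0
    by_cases hcase : OPT ≤ 4 * R
    · calc OPT ≤ 4 * R := hcase
        _ = 4 * R * 1 := by ring
        _ ≤ 4 * R * SW := by
            apply mul_le_mul_of_nonneg_left hSW1
            linarith
    · push_neg at hcase
      have hR4 : 4 < R := by nlinarith [hcase, hOPTub, hRsq, hR1]
      have hOPT16 : 16 < OPT := by nlinarith [hR4, hcase]
      set t : ℕ := Nat.ceil (OPT/2) with htdef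
      have htlb : OPT/2 ≤ (t:ℝ) := Nat.le_ceil _
      have htub : (t:ℝ) ≤ OPT/2 + 1 := by
        have := Nat.ceil_lt_add_one (a := OPT/2) (by linarith)
        linarith
      have ht1 : 1 ≤ t := by
        rw [htdef]
        apply Nat.one_le_iff_ne_zero.2
        intro hc
        have : (t:ℝ) = 0 := by rw [htdef] at *; exact_mod_cast hc
        linarith
      have htn : t ≤ n := by
        have h1 : (t:ℝ) ≤ (n:ℝ) := by
          have hn2 : (2:ℝ) ≤ (n:ℝ) := by nlinarith [hRsq, hR4]
          linarith [hOPTub]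
        exact_mod_cast h1
      have hmain := rpSW_main hn0 u s hu hN μ t ht1 htn
      rw [← hOPT, ← hSWdef] at hmain
      have htOPT : OPT/4 ≤ OPT - (t:ℝ) := by linarith
      have hquad : OPT/2 * (OPT/4) ≤ (t:ℝ) * (OPT - (t:ℝ)) :=
        mul_le_mul htlb htOPT (by linarith) (by linarith)
      have hnR : (0:ℝ) < (n:ℝ) := by exact_mod_cast hn0
      have hm2 : (t:ℝ) * (OPT - (t:ℝ)) ≤ (n:ℝ) * SW := by
        have h := mul_le_mul_of_nonneg_left hmain hnR.le
        calc (t:ℝ) * (OPT - (t:ℝ)) = (n:ℝ) * ((t:ℝ)/(n:ℝ) * (OPT - (t:ℝ))) := by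
              field_simp
          _ ≤ (n:ℝ) * SW := h
      have hkey : OPT * OPT / 8 ≤ R * R * SW := by
        rw [hRsq]
        nlinarith [hquad, hm2]
      have h1 : R * OPT / 2 ≤ R * R * SW := by
        nlinarith [hkey, mul_le_mul_of_nonneg_right hcase.le hOPTnn]
      have hRpos : (0:ℝ) < R := by linarith
      have h2 : OPT / 2 ≤ R * SW := by
        have h3 : R * (OPT/2) ≤ R * (R * SW) := by ring_nf; ring_nf at h1; linarith
        exact (mul_le_mul_iff_right₀ hRpos).1 h3
      have h4 : 0 ≤ R * SW := mul_nonneg hRpos.le (by linarith)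
      linarith

end Welfare
end RP2
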